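/- Let p > 2, γ > 2 be real numbers, let λ > 0, θ₁ > 0, K > 0, θ₂ ≥ 0, θ₃ ≥ 0. Then there exist constants C ≥ 0 and C̃ ≥ 0, depending only on p, λ, γ, θ₁, θ₂, θ₃, such that for every real ε with 0 < ε ≤ √((p−2) θ₁ λ^{γ/2}/(p (p−1) K)) and all real numbers x, y, g ≥ 0 with √λ · x ≤ y, one has −p θ₁ x^{p−2} y^γ + p θ₂ x^p + p θ₃ x^{p−2} + p x^{p−2} g y + (p(p−1)/2) ε² K (x^{p−2} + x^p) ≤ −θ₁ λ^{γ/2} x^p + C + C̃ g^{pγ/(2(γ−1))}. -/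

import Mathlib

private lemma young' {a b r : ℝ} (ha : 0 ≤ a) (hb : 0 ≤ b) (hr : 1 < r) :
    a * b ≤ a ^ r + b ^ (r / (r - 1)) := by
  have hr1 : (0:ℝ) < r - 1 := by linarith
  have hc : Real.HolderConjugate r (r / (r - 1)) := by
    exact (Real.holderConjugate_iff_eq_conjExponent hr).2 rfl
  have h := Real.young_inequality_of_nonneg ha hb hc
  have hs : (1:ℝ) ≤ r / (r - 1) := by
    rw [le_div_iff₀ hr1]; linarith
  have h1 : a ^ r / r ≤ a ^ r := div_le_self (Real.rpow_nonneg ha r) hr.le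
  have h2 : b ^ (r / (r - 1)) / (r / (r - 1)) ≤ b ^ (r / (r - 1)) :=
    div_le_self (Real.rpow_nonneg hb _) hs
  linarith

private lemma rpow_le_rpow_add_one {x a b : ℝ} (hx : 0 ≤ x) (ha : 0 ≤ a) (hab : a ≤ b) :
    x ^ a ≤ x ^ b + 1 := by
  rcases le_or_gt x 1 with h | h
  · have h1 := Real.rpow_le_one hx h ha
    have h2 : 0 ≤ x ^ b := Real.rpow_nonneg hx b
    linarith
  · have h1 := Real.rpow_le_rpow_of_exponent_le h.le hab
    linarith

set_option maxHeartbeats 1000000 in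
/-- Combined dissipativity estimate of the absorbing-set lemma for locally monotone
SPDEs with coercivity exponent `γ > 2`. Real powers are interpreted via `Real.rpow`. -/
theorem stmt_14 (p γ lam θ₁ θ₂ θ₃ : ℝ) (hp : 2 < p) (hγ : 2 < γ)
    (hlam : 0 < lam) (hθ₁ : 0 < θ₁) (hθ₂ : 0 ≤ θ₂) (hθ₃ : 0 ≤ θ₃) :
    ∃ C C' : ℝ, 0 ≤ C ∧ 0 ≤ C' ∧
      ∀ K : ℝ, 0 < K → ∀ ε : ℝ, 0 < ε →
        ε ≤ Real.sqrt ((p - 2) * θ₁ * lam ^ (γ / 2) / (p * (p - 1) * K)) →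
        ∀ x y g : ℝ, 0 ≤ x → 0 ≤ y → 0 ≤ g → Real.sqrt lam * x ≤ y →
          -p * θ₁ * x ^ (p - 2) * y ^ γ + p * θ₂ * x ^ p + p * θ₃ * x ^ (p - 2)
              + p * x ^ (p - 2) * g * y
              + (p * (p - 1) / 2) * ε ^ (2 : ℕ) * K * (x ^ (p - 2) + x ^ p)
            ≤ -θ₁ * lam ^ (γ / 2) * x ^ p + C
              + C' * g ^ (p * γ / (2 * (γ - 1))) := by
  have hγ1 : (0:ℝ) < γ - 1 := by linarith
  have hγ2 : (0:ℝ) < γ - 2 := by linarith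
  have hp0 : (0:ℝ) < p := by linarith
  have hp1 : (0:ℝ) < p - 1 := by linarith
  have hp2 : (0:ℝ) < p - 2 := by linarith
  have hq0 : (0:ℝ) < p + γ - 2 := by linarith
  obtain ⟨B, hBdef⟩ : ∃ t : ℝ, t = lam ^ (γ / 2) := ⟨_, rfl⟩
  rw [← hBdef]
  have hB0 : 0 < B := hBdef ▸ Real.rpow_pos_of_pos hlam _
  obtain ⟨c, hcdef⟩ : ∃ t : ℝ, t = (θ₁ / 2) ^ (1 / γ) := ⟨_, rfl⟩
  have hc : (0:ℝ) < c := hcdef ▸ Real.rpow_pos_of_pos (by linarith) _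
  have hC₁ : (0:ℝ) ≤ p * c ^ (-(γ / (γ - 1))) :=
    mul_nonneg hp0.le (Real.rpow_nonneg hc.le _)
  obtain ⟨A, hAdef⟩ : ∃ t : ℝ,
      t = (p - 2) * (θ₁ * B) + p * θ₂ + p * θ₃ + p * c ^ (-(γ / (γ - 1))) := ⟨_, rfl⟩
  have hA0 : (0:ℝ) ≤ A := by
    have h1 : 0 ≤ (p - 2) * (θ₁ * B) := mul_nonneg hp2.le (mul_nonneg hθ₁.le hB0.le)
    have h2 : 0 ≤ p * θ₂ := mul_nonneg hp0.le hθ₂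
    have h3 : 0 ≤ p * θ₃ := mul_nonneg hp0.le hθ₃
    rw [hAdef]; linarith
  have hAL : (0:ℝ) < A + θ₁ * B := by
    have := mul_pos hθ₁ hB0; linarith
  have hT0 : (0:ℝ) < p * (θ₁ * B) / 2 / (A + θ₁ * B) :=
    div_pos (by nlinarith [mul_pos hθ₁ hB0]) hAL
  obtain ⟨δ, hδdef⟩ : ∃ t : ℝ,
      t = (p * (θ₁ * B) / 2 / (A + θ₁ * B)) ^ (p / (p + γ - 2)) := ⟨_, rfl⟩
  have hδ0 : 0 < δ := hδdef ▸ Real.rpow_pos_of_pos hT0 _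
  obtain ⟨C₂, hC₂def⟩ : ∃ t : ℝ,
      t = (A + θ₁ * B) * δ ^ (-((p + γ - 2) / (γ - 2))) := ⟨_, rfl⟩
  have hC₂0 : 0 ≤ C₂ := hC₂def ▸ mul_nonneg hAL.le (Real.rpow_nonneg hδ0.le _)
  refine ⟨p * θ₃ + (p - 2) / 2 * (θ₁ * B) + C₂, p * c ^ (-(γ / (γ - 1))), ?_, hC₁, ?_⟩
  · have h3 : 0 ≤ p * θ₃ := mul_nonneg hp0.le hθ₃
    have h4 : 0 ≤ (p - 2) / 2 * (θ₁ * B) :=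
      mul_nonneg (by linarith) (mul_nonneg hθ₁.le hB0.le)
    linarith
  intro K hK ε hε hεle x y g hx hy hg hxy
  have hxp : 0 ≤ x ^ p := Real.rpow_nonneg hx _
  have hxp2 : 0 ≤ x ^ (p - 2) := Real.rpow_nonneg hx _
  -- h2 : embedding estimate
  have hsl : Real.sqrt lam ^ γ = B := by
    rw [Real.sqrt_eq_rpow, ← Real.rpow_mul hlam.le, hBdef]
    congr 1
    ring
  have hyγ : B * x ^ γ ≤ y ^ γ := by
    have h0 : (Real.sqrt lam * x) ^ γ ≤ y ^ γ :=
      Real.rpow_le_rpow (mul_nonneg (Real.sqrt_nonneg _) hx) hxy (by linarith)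
    rwa [Real.mul_rpow (Real.sqrt_nonneg _) hx, hsl] at h0
  have hxx : x ^ (p + γ - 2) = x ^ (p - 2) * x ^ γ := by
    rw [← Real.rpow_add' hx (by intro h0; linarith : p - 2 + γ ≠ 0)]
    congr 1
    ring
  have h2 : (p * θ₁ / 2) * (B * x ^ (p + γ - 2)) ≤ (p * θ₁ / 2) * (x ^ (p - 2) * y ^ γ) := by
    have h := mul_le_mul_of_nonneg_left hyγ hxp2
    have h' := mul_le_mul_of_nonneg_left h (show (0:ℝ) ≤ p * θ₁ / 2 by positivity)
    calc (p * θ₁ / 2) * (B * x ^ (p + γ - 2))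
        = (p * θ₁ / 2) * (x ^ (p - 2) * (B * x ^ γ)) := by rw [hxx]; ring
      _ ≤ (p * θ₁ / 2) * (x ^ (p - 2) * y ^ γ) := h'
  -- h3 : Itô correction estimate
  have hS : (0:ℝ) ≤ x ^ (p - 2) + x ^ p := by linarith
  have ht0 : (0:ℝ) ≤ (p - 2) * θ₁ * B / (p * (p - 1) * K) :=
    div_nonneg (mul_nonneg (mul_nonneg hp2.le hθ₁.le) hB0.le)
      (mul_nonneg (mul_nonneg hp0.le hp1.le) hK.le)
  have hε2 : ε ^ (2:ℕ) * K ≤ (p - 2) * (θ₁ * B) / (p * (p - 1)) := by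
    have h1 : ε ^ (2:ℕ) ≤ (p - 2) * θ₁ * B / (p * (p - 1) * K) := by
      have hsq := Real.sq_sqrt ht0
      have h2' : ε ^ (2:ℕ) ≤ Real.sqrt ((p - 2) * θ₁ * B / (p * (p - 1) * K)) ^ (2:ℕ) :=
        pow_le_pow_left₀ hε.le hεle 2
      rwa [hsq] at h2'
    have h3 := mul_le_mul_of_nonneg_right h1 hK.le
    calc ε ^ (2:ℕ) * K ≤ (p - 2) * θ₁ * B / (p * (p - 1) * K) * K := h3
      _ = (p - 2) * (θ₁ * B) / (p * (p - 1)) := by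
          field_simp [hp0.ne', hp1.ne', hK.ne']
  have h3 : (p * (p - 1) / 2) * ε ^ (2:ℕ) * K * (x ^ (p - 2) + x ^ p)
      ≤ (p - 2) / 2 * (θ₁ * B) * (x ^ (p - 2) + x ^ p) := by
    have h := mul_le_mul_of_nonneg_right hε2 hS
    have h' := mul_le_mul_of_nonneg_left h (show (0:ℝ) ≤ p * (p - 1) / 2 by positivity)
    calc (p * (p - 1) / 2) * ε ^ (2:ℕ) * K * (x ^ (p - 2) + x ^ p)
        = (p * (p - 1) / 2) * (ε ^ (2:ℕ) * K * (x ^ (p - 2) + x ^ p)) := by ring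
      _ ≤ (p * (p - 1) / 2) * ((p - 2) * (θ₁ * B) / (p * (p - 1)) * (x ^ (p - 2) + x ^ p)) := h'
      _ = (p - 2) / 2 * (θ₁ * B) * (x ^ (p - 2) + x ^ p) := by
          field_simp [hp0.ne', hp1.ne']
  -- h1 : Young for the noise cross term
  have hcγ : c ^ γ = θ₁ / 2 := by
    rw [hcdef, ← Real.rpow_mul (by linarith : (0:ℝ) ≤ θ₁ / 2), one_div,
      inv_mul_cancel₀ (by linarith : γ ≠ 0), Real.rpow_one]
  have hyoung1 := young' (mul_nonneg hc.le hy) (div_nonneg hg hc.le)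
    (show (1:ℝ) < γ by linarith)
  have e1 : (c * y) * (g / c) = g * y := by
    field_simp
  have e2 : (c * y) ^ γ = θ₁ / 2 * y ^ γ := by
    rw [Real.mul_rpow hc.le hy, hcγ]
  have e3 : (g / c) ^ (γ / (γ - 1)) = c ^ (-(γ / (γ - 1))) * g ^ (γ / (γ - 1)) := by
    rw [Real.div_rpow hg hc.le, div_eq_mul_inv, ← Real.rpow_neg hc.le]
    ring
  rw [e1, e2, e3] at hyoung1
  have h1 : p * x ^ (p - 2) * g * y
      ≤ (p * θ₁ / 2) * (x ^ (p - 2) * y ^ γ)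
        + (p * c ^ (-(γ / (γ - 1)))) * (x ^ (p - 2) * g ^ (γ / (γ - 1))) := by
    have h := mul_le_mul_of_nonneg_left hyoung1
      (show (0:ℝ) ≤ p * x ^ (p - 2) by positivity)
    linarith [h]
  -- h4 : Young to split x^(p-2) g^(γ/(γ-1))
  have hyoung2 := young' hxp2 (Real.rpow_nonneg hg (γ / (γ - 1)))
    (show (1:ℝ) < p / (p - 2) by rw [lt_div_iff₀ hp2]; linarith)
  have e4 : (x ^ (p - 2)) ^ (p / (p - 2)) = x ^ p := by
    rw [← Real.rpow_mul hx]
    congr 1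
    field_simp
  have e5 : p / (p - 2) / (p / (p - 2) - 1) = p / 2 := by
    have hb : p / (p - 2) - 1 = 2 / (p - 2) := by
      field_simp
      ring
    rw [hb, div_div_div_cancel_right₀ hp2.ne']
  have e6 : (g ^ (γ / (γ - 1))) ^ (p / 2) = g ^ (p * γ / (2 * (γ - 1))) := by
    rw [← Real.rpow_mul hg]
    congr 1
    field_simp
  rw [e4, e5, e6] at hyoung2
  have h4 : (p * c ^ (-(γ / (γ - 1)))) * (x ^ (p - 2) * g ^ (γ / (γ - 1)))
      ≤ (p * c ^ (-(γ / (γ - 1)))) * x ^ p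
        + (p * c ^ (-(γ / (γ - 1)))) * g ^ (p * γ / (2 * (γ - 1))) := by
    have h := mul_le_mul_of_nonneg_left hyoung2 hC₁
    linarith [h]
  -- h5 : absorption of x^p into x^(p+γ-2)
  have hyoung3 := young' (mul_nonneg hδ0.le hxp)
    (show (0:ℝ) ≤ 1 / δ by positivity)
    (show (1:ℝ) < (p + γ - 2) / p by rw [lt_div_iff₀ hp0]; linarith)
  have e7 : (δ * x ^ p) * (1 / δ) = x ^ p := by
    field_simp
  have eδ : δ ^ ((p + γ - 2) / p) = p * (θ₁ * B) / 2 / (A + θ₁ * B) := by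
    rw [hδdef, ← Real.rpow_mul hT0.le,
      show p / (p + γ - 2) * ((p + γ - 2) / p) = 1 by field_simp, Real.rpow_one]
  have exq : (x ^ p) ^ ((p + γ - 2) / p) = x ^ (p + γ - 2) := by
    rw [← Real.rpow_mul hx]
    congr 1
    field_simp
  have e8 : (δ * x ^ p) ^ ((p + γ - 2) / p)
      = p * (θ₁ * B) / 2 / (A + θ₁ * B) * x ^ (p + γ - 2) := by
    rw [Real.mul_rpow hδ0.le hxp, eδ, exq]
  have e9 : (p + γ - 2) / p / ((p + γ - 2) / p - 1) = (p + γ - 2) / (γ - 2) := by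
    have hb : (p + γ - 2) / p - 1 = (γ - 2) / p := by
      field_simp
      ring
    rw [hb, div_div_div_cancel_right₀ hp0.ne']
  have e10 : (1 / δ) ^ ((p + γ - 2) / (γ - 2)) = δ ^ (-((p + γ - 2) / (γ - 2))) := by
    rw [one_div, ← Real.rpow_neg_one δ, ← Real.rpow_mul hδ0.le]
    congr 1
    ring
  rw [e7, e9, e8, e10] at hyoung3
  have h5 : ((p - 2) * (θ₁ * B) + p * θ₂ + p * θ₃ + p * c ^ (-(γ / (γ - 1))) + θ₁ * B) * x ^ p
      ≤ p / 2 * (θ₁ * B) * x ^ (p + γ - 2) + C₂ := by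
    have h := mul_le_mul_of_nonneg_left hyoung3 hAL.le
    have e11 : (A + θ₁ * B) * (p * (θ₁ * B) / 2 / (A + θ₁ * B)) = p / 2 * (θ₁ * B) := by
      field_simp
    have h' : (A + θ₁ * B) * x ^ p ≤ p / 2 * (θ₁ * B) * x ^ (p + γ - 2) + C₂ := by
      rw [hC₂def]
      calc (A + θ₁ * B) * x ^ p
          ≤ (A + θ₁ * B) * (p * (θ₁ * B) / 2 / (A + θ₁ * B) * x ^ (p + γ - 2)
              + δ ^ (-((p + γ - 2) / (γ - 2)))) := h
        _ = (A + θ₁ * B) * (p * (θ₁ * B) / 2 / (A + θ₁ * B)) * x ^ (p + γ - 2)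
              + (A + θ₁ * B) * δ ^ (-((p + γ - 2) / (γ - 2))) := by ring
        _ = p / 2 * (θ₁ * B) * x ^ (p + γ - 2)
              + (A + θ₁ * B) * δ ^ (-((p + γ - 2) / (γ - 2))) := by rw [e11]
    rw [hAdef] at h'
    exact h'
  -- h6 : x^(p-2) ≤ x^p + 1
  have h6 : x ^ (p - 2) ≤ x ^ p + 1 :=
    rpow_le_rpow_add_one hx (by linarith) (by linarith)
  have h6a : p * θ₃ * x ^ (p - 2) ≤ p * θ₃ * (x ^ p + 1) :=
    mul_le_mul_of_nonneg_left h6 (mul_nonneg hp0.le hθ₃)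
  have h6b : (p - 2) / 2 * (θ₁ * B) * x ^ (p - 2)
      ≤ (p - 2) / 2 * (θ₁ * B) * (x ^ p + 1) :=
    mul_le_mul_of_nonneg_left h6
      (mul_nonneg (by linarith) (mul_nonneg hθ₁.le hB0.le))
  linarith [h1, h2, h3, h4, h5, h6a, h6b]
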